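/- If s ⊴RC t for costandard tableaux s, t of shape λ (meaning there exists a tableau r row-equivalent to s and column-equivalent to t), then the reading word of s is lexicographically ≥ the reading word of t; moreover equality of words forces s = t. -/
import Mathlib


open Finset
open scoped Classical

namespace RCOrder

variable (q m n : ℕ) (lam : ℕ → ℕ)

/-- The multiset of entries of row `i` of a tableau of shape `λ`. -/
def rowM (t : ℕ × ℕ → Fin (m + n)) (i : ℕ) : Multiset (Fin (m + n)) :=
  (range (lam i)).val.map fun j => t (i, j)

/-- The multiset of entries of column `j`. -/
def colM (t : ℕ × ℕ → Fin (m + n)) (j : ℕ) : Multiset (Fin (m + n)) :=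
  (((range q).filter fun i => j < lam i)).val.map fun i => t (i, j)

/-- Row equivalence: `r` is obtained from `s` by permuting entries within rows. -/
def RowEquiv (r s : ℕ × ℕ → Fin (m + n)) : Prop := ∀ i, rowM m n lam r i = rowM m n lam s i

/-- Column equivalence: `r` is obtained from `t` by permuting entries within
columns. -/
def ColEquiv (r t : ℕ × ℕ → Fin (m + n)) : Prop := ∀ j, colM q m n lam r j = colM q m n lam t j

/-- Costandard: rows nondecreasing with repeats only among the odd letters
(those of index `≥ m`), columns nondecreasing with repeats only among the even
letters (index `< m`). -/
def Costd (t : ℕ × ℕ → Fin (m + n)) : Prop :=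
  (∀ i j, i < q → j + 1 < lam i →
    t (i, j) ≤ t (i, j + 1) ∧ (t (i, j) = t (i, j + 1) → m ≤ (t (i, j) : ℕ))) ∧
  (∀ i j, i + 1 < q → j < lam (i + 1) →
    t (i, j) ≤ t (i + 1, j) ∧ (t (i, j) = t (i + 1, j) → (t (i, j) : ℕ) < m))

/-- The reading word of a tableau (rows left to right, top to bottom). -/
def wrd (t : ℕ × ℕ → Fin (m + n)) : List (Fin (m + n)) :=
  (List.range q).flatMap fun i => (List.range (lam i)).map fun j => t (i, j)



private lemma lex_append_right {α} {r : α → α → Prop} :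
    ∀ {l₁ l₂ : List α}, List.Lex r l₁ l₂ → l₁.length = l₂.length →
      ∀ (c d : List α), List.Lex r (l₁ ++ c) (l₂ ++ d) := by
  intro l₁ l₂ h
  induction h with
  | nil => intro hlen; simp at hlen
  | rel h => intro _ c d; exact List.Lex.rel h
  | cons h ih => intro hlen c d; exact List.Lex.cons (ih (by simpa using hlen) c d)

private lemma lex_append_left {α} {r : α → α → Prop} (p : List α) {l₁ l₂ : List α}
    (h : List.Lex r l₁ l₂) : List.Lex r (p ++ l₁) (p ++ l₂) := by
  induction p with
  | nil => exact h
  | cons a p ih => exact List.Lex.cons ih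

private lemma lex_irrefl {α} [PartialOrder α] : ∀ l : List α, ¬ List.Lex (· < ·) l l := by
  intro l
  induction l with
  | nil => intro h; cases h
  | cons a l ih =>
    intro h
    cases h with
    | rel h => exact absurd h (lt_irrefl a)
    | cons h => exact ih h

private lemma map_range_le_lex {α} [LinearOrder α] :
    ∀ (N : ℕ) (f g : ℕ → α), (∀ j < N, f j ≤ g j) →
      (List.range N).map f = (List.range N).map g ∨
        List.Lex (· < ·) ((List.range N).map f) ((List.range N).map g) := by
  intro N
  induction N with
  | zero => simp
  | succ N ih =>
    intro f g h
    rw [List.range_succ_eq_map]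
    simp only [List.map_cons, List.map_map]
    rcases lt_or_eq_of_le (h 0 (Nat.succ_pos N)) with hlt | heq
    · right; exact List.Lex.rel hlt
    · rcases ih (f ∘ Nat.succ) (g ∘ Nat.succ) (fun j hj => h (j + 1) (by omega)) with h1 | h1
      · left; rw [heq, h1]
      · right; rw [heq]; exact List.Lex.cons h1

private lemma map_range_eq_iff {α} : ∀ (N : ℕ) (f g : ℕ → α),
    (List.range N).map f = (List.range N).map g → ∀ j < N, f j = g j := by
  intro N
  induction N with
  | zero => intro f g _ j hj; omega
  | succ N ih =>
    intro f g h j hj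
    rw [List.range_succ_eq_map] at h
    simp only [List.map_cons, List.map_map, List.cons.injEq] at h
    match j with
    | 0 => exact h.1
    | j + 1 => exact ih (f ∘ Nat.succ) (g ∘ Nat.succ) h.2 j (by omega)

private lemma row_mono {q m n : ℕ} {lam : ℕ → ℕ} {t : ℕ × ℕ → Fin (m + n)}
    (ht : Costd q m n lam t) {i : ℕ} (hi : i < q) (j : ℕ) :
    ∀ d, j + d < lam i → t (i, j) ≤ t (i, j + d) := by
  intro d
  induction d with
  | zero => intro _; exact le_refl _
  | succ d ih =>
    intro h
    exact le_trans (ih (by omega)) (ht.1 i (j + d) hi (by omega)).1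

private lemma col_min {q m n : ℕ} {lam : ℕ → ℕ} (hlam : ∀ i, lam (i + 1) ≤ lam i)
    {t : ℕ × ℕ → Fin (m + n)} (ht : Costd q m n lam t) :
    ∀ d, d < q → ∀ j, j < lam d → t (0, j) ≤ t (d, j) := by
  intro d
  induction d with
  | zero => intro _ _ _; exact le_refl _
  | succ d ih =>
    intro hd j hj
    exact le_trans (ih (by omega) j (lt_of_lt_of_le hj (hlam d))) (ht.2 d j hd hj).1

private lemma mem_colM {q m n : ℕ} {lam : ℕ → ℕ} {t : ℕ × ℕ → Fin (m + n)} {j : ℕ}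
    {x : Fin (m + n)} :
    x ∈ colM q m n lam t j ↔ ∃ i, i < q ∧ j < lam i ∧ x = t (i, j) := by
  simp [colM, Finset.mem_filter, Finset.mem_range, eq_comm, and_assoc]

private lemma rowM_coe (m n : ℕ) (lam : ℕ → ℕ) (t : ℕ × ℕ → Fin (m + n)) (i : ℕ) :
    rowM m n lam t i = ((List.range (lam i)).map fun j => t (i, j) : List (Fin (m + n))) := rfl

private lemma colM_succ (q m n : ℕ) (lam : ℕ → ℕ) (t : ℕ × ℕ → Fin (m + n)) (j : ℕ) :
    colM (q + 1) m n lam t j =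
      (if j < lam 0 then {t (0, j)} else 0) +
        colM q m n (fun i => lam (i + 1)) (fun p => t (p.1 + 1, p.2)) j := by
  have hval : ∀ (Q : ℕ) (p : ℕ → Prop) [DecidablePred p],
      ((Finset.range Q).filter p).val = ((List.range Q).filter (fun i => decide (p i)) : List ℕ) := by
    intro Q p _
    rfl
  unfold colM
  rw [hval, hval, List.range_succ_eq_map, List.filter_cons]
  by_cases h : j < lam 0 <;>
    simp [h, List.filter_map, Function.comp_def, Nat.succ_eq_add_one]

private lemma wrd_succ (q m n : ℕ) (lam : ℕ → ℕ) (t : ℕ × ℕ → Fin (m + n)) :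
    wrd (q + 1) m n lam t = ((List.range (lam 0)).map fun j => t (0, j)) ++
      wrd q m n (fun i => lam (i + 1)) (fun p => t (p.1 + 1, p.2)) := by
  unfold wrd
  rw [List.range_succ_eq_map, List.flatMap_cons]
  congr 1
  rw [List.flatMap_map]


private lemma main_ind (m n : ℕ) : ∀ (q : ℕ) (lam : ℕ → ℕ),
    (∀ i, lam (i + 1) ≤ lam i) → (∀ i, q ≤ i → lam i = 0) →
    ∀ s t : ℕ × ℕ → Fin (m + n), Costd q m n lam s → Costd q m n lam t →
    (∃ r, RowEquiv m n lam r s ∧ ColEquiv q m n lam r t) →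
    (wrd q m n lam s = wrd q m n lam t ∨
      List.Lex (· < ·) (wrd q m n lam t) (wrd q m n lam s)) ∧
    (wrd q m n lam s = wrd q m n lam t → ∀ i j, i < q → j < lam i → s (i, j) = t (i, j)) := by
  intro q
  induction q with
  | zero =>
    intro lam _ _ s t _ _ _
    exact ⟨Or.inl rfl, fun _ i j hi _ => absurd hi (Nat.not_lt_zero i)⟩
  | succ q ih =>
    intro lam hlam hsupp s t hs ht hrc
    obtain ⟨r, hrow, hcol⟩ := hrc
    have hq0 : (0:ℕ) < q + 1 := Nat.succ_pos q
    have hcb : ∀ j, j < lam 0 → t (0, j) ≤ r (0, j) := by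
      intro j hj
      have hmem : r (0, j) ∈ colM (q+1) m n lam t j := by
        rw [← hcol j]
        exact mem_colM.2 ⟨0, Nat.succ_pos q, hj, rfl⟩
      obtain ⟨i, hi, hji, he⟩ := mem_colM.1 hmem
      rw [he]
      exact col_min hlam ht i hi j hji
    have hca : ∀ j, j < lam 0 → t (0, j) ≤ s (0, j) := by
      intro j hj
      by_contra hlt
      push_neg at hlt
      have key : ∀ u : ℕ × ℕ → Fin (m+n),
          Multiset.countP (fun x => x < t (0, j)) (rowM m n lam u 0) =
            ((Finset.range (lam 0)).filter fun k => u (0, k) < t (0, j)).card := by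
        intro u
        unfold rowM
        rw [Multiset.countP_map]
        rfl
      have hcount :
          ((Finset.range (lam 0)).filter fun k => r (0, k) < t (0, j)).card =
          ((Finset.range (lam 0)).filter fun k => s (0, k) < t (0, j)).card := by
        rw [← key r, ← key s, hrow 0]
      have hle1 : ((Finset.range (lam 0)).filter fun k => r (0, k) < t (0, j)).card ≤ j := by
        have hsub : ((Finset.range (lam 0)).filter fun k => r (0, k) < t (0, j)) ⊆
            Finset.range j := by
          intro k hk
          simp only [Finset.mem_filter, Finset.mem_range] at hk ⊢
          by_contra hkj
          push_neg at hkj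
          have h1 : t (0, j) ≤ t (0, k) := by
            have := row_mono ht hq0 j (k - j) (by omega)
            rwa [Nat.add_sub_cancel' hkj] at this
          exact absurd (lt_of_le_of_lt (le_trans h1 (hcb k hk.1)) hk.2) (lt_irrefl _)
        calc ((Finset.range (lam 0)).filter fun k => r (0, k) < t (0, j)).card
            ≤ (Finset.range j).card := Finset.card_le_card hsub
          _ = j := Finset.card_range j
      have hge : j + 1 ≤ ((Finset.range (lam 0)).filter fun k => s (0, k) < t (0, j)).card := by
        have hsub : Finset.range (j+1) ⊆
            (Finset.range (lam 0)).filter fun k => s (0, k) < t (0, j) := by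
          intro k hk
          simp only [Finset.mem_range] at hk
          simp only [Finset.mem_filter, Finset.mem_range]
          refine ⟨by omega, ?_⟩
          have h1 : s (0, k) ≤ s (0, j) := by
            have := row_mono hs hq0 k (j - k) (by omega)
            rwa [Nat.add_sub_cancel' (by omega : k ≤ j)] at this
          exact lt_of_le_of_lt h1 hlt
        calc j + 1 = (Finset.range (j+1)).card := (Finset.card_range _).symm
          _ ≤ _ := Finset.card_le_card hsub
      omega
    have hws := wrd_succ q m n lam s
    have hwt := wrd_succ q m n lam t
    rcases map_range_le_lex (lam 0) (fun j => t (0, j)) (fun j => s (0, j)) hca with hCA | hlex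
    · -- first rows equal
      have hrow0 : ∀ j, j < lam 0 → t (0, j) = s (0, j) := map_range_eq_iff (lam 0) _ _ hCA
      have hbc : ∀ j, j < lam 0 → r (0, j) = t (0, j) := by
        have hmr : rowM m n lam r 0 = rowM m n lam t 0 := by
          rw [hrow 0, rowM_coe m n lam s 0, rowM_coe m n lam t 0]
          exact congrArg _ hCA.symm
        have e1 : ∀ u : ℕ × ℕ → Fin (m+n),
            ((rowM m n lam u 0).map Fin.val).sum =
              ∑ k ∈ Finset.range (lam 0), ((u (0, k)) : ℕ) := by
          intro u
          unfold rowM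
          rw [Multiset.map_map]
          rfl
        have hsum : ∑ k ∈ Finset.range (lam 0), ((t (0, k)) : ℕ) =
            ∑ k ∈ Finset.range (lam 0), ((r (0, k)) : ℕ) := by
          rw [← e1 t, ← e1 r, hmr]
        have hle : ∀ k ∈ Finset.range (lam 0), ((t (0, k)) : ℕ) ≤ ((r (0, k)) : ℕ) := by
          intro k hk
          exact hcb k (Finset.mem_range.1 hk)
        have h2 := (Finset.sum_eq_sum_iff_of_le hle).1 hsum
        intro j hj
        exact (Fin.ext (h2 j (Finset.mem_range.2 hj))).symm
      have hcol' : ColEquiv q m n (fun i => lam (i+1)) (fun p => r (p.1+1, p.2))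
          (fun p => t (p.1+1, p.2)) := by
        intro j
        have h := hcol j
        rw [colM_succ, colM_succ] at h
        by_cases hj : j < lam 0
        · rw [if_pos hj, if_pos hj, hbc j hj] at h
          exact add_left_cancel h
        · rw [if_neg hj, if_neg hj] at h
          simpa using h
      have hrow' : RowEquiv m n (fun i => lam (i+1)) (fun p => r (p.1+1, p.2))
          (fun p => s (p.1+1, p.2)) := fun i => hrow (i+1)
      have hs' : Costd q m n (fun i => lam (i+1)) (fun p => s (p.1+1, p.2)) :=
        ⟨fun i j hi hj => hs.1 (i+1) j (by omega) hj,
         fun i j hi hj => hs.2 (i+1) j (by omega) hj⟩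
      have ht' : Costd q m n (fun i => lam (i+1)) (fun p => t (p.1+1, p.2)) :=
        ⟨fun i j hi hj => ht.1 (i+1) j (by omega) hj,
         fun i j hi hj => ht.2 (i+1) j (by omega) hj⟩
      obtain ⟨ih1, ih2⟩ := ih (fun i => lam (i+1)) (fun i => hlam (i+1))
        (fun i hi => hsupp (i+1) (by omega)) _ _ hs' ht' ⟨_, hrow', hcol'⟩
      refine ⟨?_, ?_⟩
      · rcases ih1 with h | h
        · left; rw [hws, hwt, ← hCA, h]
        · right; rw [hws, hwt, ← hCA]
          exact lex_append_left _ h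
      · intro heq i j hi hj
        rw [hws, hwt, ← hCA] at heq
        have hw' := List.append_cancel_left heq
        match i with
        | 0 => exact (hrow0 j hj).symm
        | i + 1 => exact ih2 hw' i j (by omega) hj
    · -- strict lex on the first row
      refine ⟨Or.inr ?_, ?_⟩
      · rw [hws, hwt]
        exact lex_append_right hlex (by simp) _ _
      · intro heq
        exfalso
        rw [hws, hwt] at heq
        have hAC := (List.append_inj heq (by simp)).1
        rw [hAC] at hlex
        exact lex_irrefl _ hlex


/-- Let `s`, `t` be costandard tableaux of straight shape `λ`
(with values in the graded ordered set `[m + n]`, the first `m` letters even and the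
last `n` odd), and suppose `s ⊴RC t`: there is a tableau `r` which is row equivalent
to `s` and column equivalent to `t`.  Then the reading word of `s` is
lexicographically `≥` that of `t`, and equality of the reading words forces `s = t`
(as tableaux, i.e. on all cells of `λ`). -/
theorem reading_word_ge_of_rc
    (hlam : ∀ i, lam (i + 1) ≤ lam i) (hsupp : ∀ i, q ≤ i → lam i = 0)
    (s t : ℕ × ℕ → Fin (m + n))
    (hs : Costd q m n lam s) (ht : Costd q m n lam t)
    (hrc : ∃ r, RowEquiv m n lam r s ∧ ColEquiv q m n lam r t) :
    (wrd q m n lam s = wrd q m n lam t ∨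
      List.Lex (· < ·) (wrd q m n lam t) (wrd q m n lam s)) ∧
    (wrd q m n lam s = wrd q m n lam t →
      ∀ i j, i < q → j < lam i → s (i, j) = t (i, j)) := by
  exact main_ind m n q lam hlam hsupp s t hs ht hrc

end RCOrder
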